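/- Let p = (p_1, ..., p_n) be a probability distribution with all components strictly positive, let 1 ≤ m < n, and let 0 ≤ k* < m. Suppose q_1 ≥ q_2 ≥ ... ≥ q_{k*} are exactly the k* largest components of p and each q_j > 2/m for j ≤ k*. Let A = 1 − Σ_{j=1}^{k*} q_j and let q̃ = (q_1, ..., q_{k*}, A/(m−k*), ..., A/(m−k*)), assumed sorted in non-increasing order. Let q* = (q*_1, ..., q*_m), sorted in non-increasing order, be any aggregation of p into m parts. Then q̃ is majorized by q*, and consequently H(q̃) ≥ H(q*), where H denotes Shannon entropy in bits. -/

import Mathlib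

/-- Shannon entropy in bits of a finite vector. -/
noncomputable def shannonH {m : ℕ} (w : Fin m → ℝ) : ℝ :=
  -∑ j, w j * Real.logb 2 (w j)

open Finset

/-- Extension of a `Fin m` vector to `ℕ` by zero. -/
noncomputable def extF {m : ℕ} (w : Fin m → ℝ) : ℕ → ℝ :=
  fun j => if h : j < m then w ⟨j, h⟩ else 0

lemma extF_val {m : ℕ} (w : Fin m → ℝ) (k : Fin m) : extF w k.val = w k := by
  simp [extF, k.isLt]

lemma sum_filter_lt_eq_range {m : ℕ} (w : Fin m → ℝ) {i : ℕ} (him : i ≤ m) :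
    ∑ k ∈ Finset.univ.filter (fun k : Fin m => k.val < i), w k
      = ∑ j ∈ Finset.range i, extF w j := by
  refine Finset.sum_bij' (fun (k : Fin m) _ => k.val)
    (fun j hj => (⟨j, lt_of_lt_of_le (Finset.mem_range.mp hj) him⟩ : Fin m)) ?_ ?_ ?_ ?_ ?_
  · intro a ha; simp only [Finset.mem_filter, Finset.mem_univ, true_and] at ha
    exact Finset.mem_range.mpr ha
  · intro a ha; simp only [Finset.mem_filter, Finset.mem_univ, true_and]
    exact Finset.mem_range.mp ha
  · intro a _; rfl
  · intro a _; rfl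
  · intro a _; rw [extF_val]

lemma card_filter_lt_fin {m : ℕ} {i : ℕ} (him : i ≤ m) :
    (Finset.univ.filter (fun k : Fin m => k.val < i)).card = i := by
  have h : Finset.univ.filter (fun k : Fin m => k.val < i)
      = (Finset.range i).attachFin
        (fun x hx => lt_of_lt_of_le (Finset.mem_range.mp hx) him) := by
    ext k
    simp [Finset.mem_attachFin]
  rw [h, Finset.card_attachFin, Finset.card_range]

lemma sum_range_extF {m : ℕ} (w : Fin m → ℝ) :
    ∑ j ∈ Finset.range m, extF w j = ∑ k, w k := by
  rw [← sum_filter_lt_eq_range w (le_refl m)]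
  congr 1
  apply Finset.filter_true_of_mem
  intro k _
  exact k.isLt

/-- A sum over any subset of `Fin m` of cardinality `≤ i` of a nonnegative antitone vector is at
most the sum over the initial segment of length `i`. -/
lemma sum_subset_le_initial {m : ℕ} (w : Fin m → ℝ) (hw : Antitone w) (hw0 : ∀ k, 0 ≤ w k)
    (S : Finset (Fin m)) {i : ℕ} (hSi : S.card ≤ i) (him : i ≤ m) :
    ∑ k ∈ S, w k ≤ ∑ k ∈ Finset.univ.filter (fun k : Fin m => k.val < i), w k := by
  have hsm : S.card ≤ m := by
    simpa using Finset.card_le_univ S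
  set s := S.card with hs
  set e := S.orderEmbOfFin (rfl : S.card = s) with he
  -- each value e j has index at least j
  have hle : ∀ j : Fin s, (j : ℕ) ≤ ((e j) : ℕ) := by
    intro j
    set F : ℕ → ℕ := fun t => if h : t < s then ((e ⟨t, h⟩ : Fin m) : ℕ) else t + m with hF
    have hFmono : StrictMono F := by
      intro x y hxy
      simp only [hF]
      by_cases hx : x < s
      · by_cases hy : y < s
        · simp only [dif_pos hx, dif_pos hy]
          exact e.strictMono (by exact Fin.mk_lt_mk.mpr hxy)
        · simp only [dif_pos hx, dif_neg hy]
          have : ((e ⟨x, hx⟩ : Fin m) : ℕ) < m := (e ⟨x, hx⟩).isLt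
          omega
      · have hy : ¬ y < s := by omega
        simp only [dif_neg hx, dif_neg hy]
        omega
    have := hFmono.le_apply (x := (j : ℕ))
    simpa [hF, dif_pos j.isLt] using this
  have hsum : ∑ k ∈ S, w k = ∑ j : Fin s, w (e j) := by
    refine (Finset.sum_bij (fun (j : Fin s) _ => (e j : Fin m)) ?_ ?_ ?_ ?_).symm
    · intro j _; exact Finset.orderEmbOfFin_mem S rfl j
    · intro a _ b _ hab; exact e.injective hab
    · intro b hb
      have : (b : Fin m) ∈ Set.range e := by
        rw [he, Finset.range_orderEmbOfFin]
        exact hb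
      obtain ⟨j, hj⟩ := this
      exact ⟨j, Finset.mem_univ j, hj⟩
    · intro j _; rfl
  rw [hsum, sum_filter_lt_eq_range w him]
  have step1 : ∑ j : Fin s, w (e j) ≤ ∑ j ∈ Finset.range s, extF w j := by
    rw [← Fin.sum_univ_eq_sum_range (fun j => extF w j) s]
    apply Finset.sum_le_sum
    intro j _
    have hjm : (j : ℕ) < m := lt_of_le_of_lt (hle j) (e j).isLt
    have : extF w (j : ℕ) = w ⟨(j : ℕ), hjm⟩ := by simp [extF, hjm]
    rw [this]
    exact hw (by rw [Fin.le_def]; exact hle j)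
  refine step1.trans (Finset.sum_le_sum_of_subset_of_nonneg
    (Finset.range_subset_range.mpr hSi) ?_)
  intro j _ _
  by_cases hj : j < m
  · simp only [extF, dif_pos hj]; exact hw0 _
  · simp [extF, hj]

/-- Averaging inequality for antitone sequences. -/
lemma avg_ineq (W : ℕ → ℝ) (hmono : ∀ a b : ℕ, a ≤ b → W b ≤ W a)
    (a i m : ℕ) (hai : a ≤ i) (him : i ≤ m) :
    ((i : ℝ) - a) * ∑ k ∈ Finset.Ico a m, W k
      ≤ ((m : ℝ) - a) * ∑ k ∈ Finset.Ico a i, W k := by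
  have hsplit : ∑ k ∈ Finset.Ico a m, W k
      = ∑ k ∈ Finset.Ico a i, W k + ∑ k ∈ Finset.Ico i m, W k :=
    (Finset.sum_Ico_consecutive _ hai him).symm
  set P := ∑ k ∈ Finset.Ico a i, W k with hP
  set S := ∑ k ∈ Finset.Ico i m, W k with hS
  have key : ((i : ℝ) - a) * S ≤ ((m : ℝ) - i) * P := by
    have h1 : ∑ b ∈ Finset.Ico i m, ∑ _k ∈ Finset.Ico a i, W b
        ≤ ∑ b ∈ Finset.Ico i m, ∑ k ∈ Finset.Ico a i, W k := by
      apply Finset.sum_le_sum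
      intro b hb
      apply Finset.sum_le_sum
      intro k hk
      exact hmono k b (le_trans (le_of_lt (Finset.mem_Ico.mp hk).2) (Finset.mem_Ico.mp hb).1)
    have h2 : ∑ b ∈ Finset.Ico i m, ∑ _k ∈ Finset.Ico a i, W b
        = ((i : ℝ) - a) * S := by
      simp only [Finset.sum_const, Nat.card_Ico, nsmul_eq_mul]
      rw [← Finset.mul_sum, Nat.cast_sub hai]
    have h3 : ∑ b ∈ Finset.Ico i m, ∑ k ∈ Finset.Ico a i, W k
        = ((m : ℝ) - i) * P := by
      rw [Finset.sum_const, Nat.card_Ico, nsmul_eq_mul, Nat.cast_sub him]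
    rw [h2, h3] at h1
    exact h1
  have hia : (a : ℝ) ≤ i := Nat.cast_le.mpr hai
  have hmi : (i : ℝ) ≤ m := Nat.cast_le.mpr him
  nlinarith [key, hsplit]

/-- Tangent-line inequality for `negMulLog`. -/
lemma negMulLog_tangent {a b : ℝ} (ha : 0 < a) (hb : 0 < b) :
    Real.negMulLog b ≤ Real.negMulLog a + (-Real.log a - 1) * (b - a) := by
  have h := Real.log_le_sub_one_of_pos (show (0:ℝ) < a / b from div_pos ha hb)
  rw [Real.log_div ha.ne' hb.ne'] at h
  have h2 : b * (Real.log a - Real.log b) ≤ b * (a / b - 1) :=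
    mul_le_mul_of_nonneg_left h hb.le
  have h3 : b * (a / b - 1) = a - b := by field_simp
  rw [h3] at h2
  simp only [Real.negMulLog]
  nlinarith [h2]

/-- Abel-summation style bound. -/
lemma abel_nonpos (m : ℕ) (c d : ℕ → ℝ)
    (hc : ∀ a b : ℕ, a ≤ b → b < m → c a ≤ c b)
    (hD : ∀ i : ℕ, i ≤ m → 0 ≤ ∑ k ∈ Finset.range i, d k)
    (hDm : ∑ k ∈ Finset.range m, d k = 0) :
    ∑ k ∈ Finset.range m, c k * d k ≤ 0 := by
  have habel := Finset.sum_range_by_parts c d m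
  rw [hDm, smul_zero, zero_sub] at habel
  simp only [smul_eq_mul] at habel
  rw [habel, neg_nonpos]
  apply Finset.sum_nonneg
  intro i hi
  have hi' := Finset.mem_range.mp hi
  have h1 : c i ≤ c (i + 1) := hc i (i + 1) (Nat.le_succ i) (by omega)
  have h2 : 0 ≤ ∑ k ∈ Finset.range (i + 1), d k := hD _ (by omega)
  nlinarith

/-- The distribution `q̃` built from the `k*` largest components of `p`
(each exceeding `2/m`) followed by equal components `A/(m-k*)` is majorized by any
sorted `m`-part aggregation `q*` of `p`, hence has at least as much entropy. -/
theorem qtilde_majorized_by_qstar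
    (n m : ℕ) (hm : 1 ≤ m) (hmn : m < n)
    (p : Fin n → ℝ) (hp : ∀ i, 0 < p i) (hpsum : ∑ i, p i = 1)
    (kstar : ℕ) (hk : kstar < m)
    (ps : Fin n → ℝ) (σ : Equiv.Perm (Fin n)) (hps : ps = p ∘ σ)
    (hpssort : Antitone ps)
    (hbig : ∀ j : Fin n, j.val < kstar → 2 / (m : ℝ) < ps j)
    (A : ℝ)
    (hA : A = 1 - ∑ j ∈ Finset.univ.filter (fun j : Fin n => j.val < kstar), ps j)
    (qt : Fin m → ℝ)
    (hqt : ∀ j : Fin m, qt j =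
      if h : j.val < kstar then ps ⟨j.val, lt_trans j.isLt hmn⟩
      else A / ((m : ℝ) - (kstar : ℝ)))
    (hqtsort : Antitone qt)
    (qstar : Fin m → ℝ) (hqstarsort : Antitone qstar)
    (f : Fin n → Fin m) (hf : Function.Surjective f)
    (hagg : ∀ j : Fin m, qstar j = ∑ i ∈ Finset.univ.filter (fun i => f i = j), p i) :
    (∀ i : ℕ,
      ∑ k ∈ Finset.univ.filter (fun k : Fin m => k.val < i), qt k ≤
      ∑ k ∈ Finset.univ.filter (fun k : Fin m => k.val < i), qstar k) ∧
    shannonH qt ≥ shannonH qstar := by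
  have hkm : (kstar : ℝ) < m := Nat.cast_lt.mpr hk
  set t : ℝ := (m : ℝ) - kstar with ht_def
  have ht : 0 < t := by simp only [ht_def]; linarith
  have hps_pos : ∀ j, 0 < ps j := by intro j; rw [hps]; exact hp _
  have hps_sum : ∑ j, ps j = 1 := by
    rw [hps]
    exact (Equiv.sum_comp σ p).trans hpsum
  have hApos : 0 < A := by
    rw [hA, sub_pos, ← hps_sum]
    refine Finset.sum_lt_sum_of_subset (Finset.filter_subset _ _)
      (Finset.mem_univ (⟨kstar, lt_trans hk hmn⟩ : Fin n)) ?_ (hps_pos _) ?_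
    · simp
    · intro j _ _; exact (hps_pos j).le
  have hsum_ps_k : ∑ j ∈ Finset.univ.filter (fun j : Fin n => j.val < kstar), ps j = 1 - A := by
    rw [hA]; ring
  have hqt_pos : ∀ j, 0 < qt j := by
    intro j; rw [hqt]
    split
    · exact hps_pos _
    · exact div_pos hApos ht
  have hqs_pos : ∀ j, 0 < qstar j := by
    intro j; rw [hagg]
    obtain ⟨i0, hi0⟩ := hf j
    exact Finset.sum_pos (fun i _ => hp i) ⟨i0, by simp [hi0]⟩
  -- extended sequences
  set Qt : ℕ → ℝ := extF qt with hQt_def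
  set Qs : ℕ → ℝ := extF qstar with hQs_def
  set Pn : ℕ → ℝ := extF ps with hPn_def
  have hQt_k : ∀ j : ℕ, j < kstar → Qt j = Pn j := by
    intro j hj
    have hjm : j < m := lt_trans hj hk
    have hjn : j < n := lt_trans hjm hmn
    simp only [hQt_def, hPn_def, extF, dif_pos hjm, dif_pos hjn]
    rw [hqt]
    simp [hj]
  have hQt_top : ∀ j : ℕ, kstar ≤ j → j < m → Qt j = A / t := by
    intro j hj hjm
    simp only [hQt_def, extF, dif_pos hjm]
    rw [hqt]
    exact dif_neg (by simp only [Fin.val_mk]; omega)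
  have hsumPn : ∑ j ∈ Finset.range kstar, Pn j = 1 - A := by
    rw [hPn_def, ← sum_filter_lt_eq_range ps (le_of_lt (lt_trans hk hmn)), hsum_ps_k]
  have hqt_sum : ∑ j ∈ Finset.range m, Qt j = 1 := by
    rw [Finset.range_eq_Ico, ← Finset.sum_Ico_consecutive _ (Nat.zero_le kstar) (le_of_lt hk)]
    have h1 : ∑ j ∈ Finset.Ico 0 kstar, Qt j = 1 - A := by
      rw [← Finset.range_eq_Ico]
      rw [Finset.sum_congr rfl (fun j hj => hQt_k j (Finset.mem_range.mp hj))]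
      exact hsumPn
    have h2 : ∑ j ∈ Finset.Ico kstar m, Qt j = A := by
      rw [Finset.sum_congr rfl (fun j hj => hQt_top j (Finset.mem_Ico.mp hj).1
        (Finset.mem_Ico.mp hj).2)]
      rw [Finset.sum_const, Nat.card_Ico, nsmul_eq_mul, Nat.cast_sub (le_of_lt hk)]
      rw [← ht_def]
      field_simp
    rw [h1, h2]; ring
  have hqs_sum : ∑ j, qstar j = 1 := by
    rw [Finset.sum_congr rfl (fun j _ => hagg j)]
    rw [Finset.sum_fiberwise_eq_sum_filter Finset.univ Finset.univ f p]
    simpa using hpsum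
  have hqs_sum_range : ∑ j ∈ Finset.range m, Qs j = 1 := by
    rw [hQs_def, sum_range_extF, hqs_sum]
  have hQs_mono : ∀ a b : ℕ, a ≤ b → Qs b ≤ Qs a := by
    intro a b hab
    by_cases hb : b < m
    · have ha : a < m := lt_of_le_of_lt hab hb
      simp only [hQs_def, extF, dif_pos hb, dif_pos ha]
      exact hqstarsort (by rw [Fin.le_def]; exact hab)
    · simp only [hQs_def, extF, dif_neg hb]
      by_cases ha : a < m
      · simp only [dif_pos ha]; exact (hqs_pos _).le
      · simp [dif_neg ha]
  -- Case 1 core: initial segments up to kstar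
  have hcase1 : ∀ i : ℕ, i ≤ kstar →
      ∑ j ∈ Finset.range i, Pn j ≤ ∑ j ∈ Finset.range i, Qs j := by
    intro i hik
    have him : i ≤ m := le_trans hik (le_of_lt hk)
    have hin : i ≤ n := le_trans him (le_of_lt hmn)
    set Sset : Finset (Fin m) :=
      (Finset.univ.filter (fun j : Fin n => j.val < i)).image (fun j => f (σ j)) with hSset
    have hcard : Sset.card ≤ i := by
      refine le_trans Finset.card_image_le ?_
      rw [card_filter_lt_fin hin]
    have h1 : ∑ j ∈ Finset.univ.filter (fun j : Fin n => j.val < i), ps j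
        ≤ ∑ u ∈ Sset, qstar u := by
      have hright : ∑ u ∈ Sset, qstar u
          = ∑ i' ∈ Finset.univ.filter (fun i' => f i' ∈ Sset), p i' := by
        rw [Finset.sum_congr rfl (fun u _ => hagg u)]
        exact Finset.sum_fiberwise_eq_sum_filter Finset.univ Sset f p
      rw [hright]
      have hleft : ∑ j ∈ Finset.univ.filter (fun j : Fin n => j.val < i), ps j
          = ∑ x ∈ (Finset.univ.filter (fun j : Fin n => j.val < i)).image σ, p x := by
        rw [Finset.sum_image (fun a _ b _ hab => σ.injective hab)]
        apply Finset.sum_congr rfl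
        intro j _
        rw [hps]; rfl
      rw [hleft]
      apply Finset.sum_le_sum_of_subset_of_nonneg
      · intro x hx
        simp only [Finset.mem_image, Finset.mem_filter, Finset.mem_univ, true_and] at hx
        obtain ⟨j, hj, rfl⟩ := hx
        simp only [Finset.mem_filter, Finset.mem_univ, true_and, hSset, Finset.mem_image]
        exact ⟨j, by simp [hj], rfl⟩
      · intro x _ _; exact (hp x).le
    have h2 : ∑ u ∈ Sset, qstar u
        ≤ ∑ k ∈ Finset.univ.filter (fun k : Fin m => k.val < i), qstar k :=
      sum_subset_le_initial qstar hqstarsort (fun k => (hqs_pos k).le) Sset hcard him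
    calc ∑ j ∈ Finset.range i, Pn j
        = ∑ j ∈ Finset.univ.filter (fun j : Fin n => j.val < i), ps j := by
          rw [hPn_def, sum_filter_lt_eq_range ps hin]
      _ ≤ ∑ u ∈ Sset, qstar u := h1
      _ ≤ ∑ k ∈ Finset.univ.filter (fun k : Fin m => k.val < i), qstar k := h2
      _ = ∑ j ∈ Finset.range i, Qs j := by rw [hQs_def, sum_filter_lt_eq_range qstar him]
  -- The majorization statement in range form
  have part1r : ∀ i : ℕ, i ≤ m →
      ∑ j ∈ Finset.range i, Qt j ≤ ∑ j ∈ Finset.range i, Qs j := by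
    intro i him
    rcases le_or_gt i kstar with hik | hik
    · rw [Finset.sum_congr rfl (fun j hj => hQt_k j (lt_of_lt_of_le (Finset.mem_range.mp hj) hik))]
      exact hcase1 i hik
    · -- kstar < i
      have hB := hcase1 kstar le_rfl
      rw [hsumPn] at hB
      set B : ℝ := ∑ j ∈ Finset.range kstar, Qs j with hBdef
      set T : ℝ := ∑ j ∈ Finset.Ico kstar i, Qs j with hTdef
      have hsplitQs : ∑ j ∈ Finset.range i, Qs j = B + T := by
        rw [Finset.range_eq_Ico, ← Finset.sum_Ico_consecutive _ (Nat.zero_le kstar) (le_of_lt hik),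
          ← Finset.range_eq_Ico]
      have hsplitQt : ∑ j ∈ Finset.range i, Qt j
          = (1 - A) + (((i : ℝ) - kstar)) * (A / t) := by
        rw [Finset.range_eq_Ico, ← Finset.sum_Ico_consecutive _ (Nat.zero_le kstar) (le_of_lt hik),
          ← Finset.range_eq_Ico]
        have hl : ∑ j ∈ Finset.range kstar, Qt j = 1 - A := by
          rw [Finset.sum_congr rfl (fun j hj => hQt_k j (Finset.mem_range.mp hj))]
          exact hsumPn
        have hr : ∑ j ∈ Finset.Ico kstar i, Qt j = ((i : ℝ) - kstar) * (A / t) := by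
          rw [Finset.sum_congr rfl (fun j hj => hQt_top j (Finset.mem_Ico.mp hj).1
            (lt_of_lt_of_le (Finset.mem_Ico.mp hj).2 him))]
          rw [Finset.sum_const, Nat.card_Ico, nsmul_eq_mul, Nat.cast_sub (le_of_lt hik)]
        rw [hl, hr]
      have hsuffix : ∑ j ∈ Finset.Ico kstar m, Qs j = 1 - B := by
        have := hqs_sum_range
        rw [Finset.range_eq_Ico, ← Finset.sum_Ico_consecutive _ (Nat.zero_le kstar) (le_of_lt hk),
          ← Finset.range_eq_Ico, ← hBdef] at this
        linarith
      have havg := avg_ineq Qs hQs_mono kstar i m (le_of_lt hik) him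
      rw [hsuffix, ← hTdef] at havg
      rw [hsplitQs, hsplitQt]
      have hx : 0 ≤ B - (1 - A) := by linarith
      have hmi : 0 ≤ (m : ℝ) - i := by
        have : (i : ℝ) ≤ m := Nat.cast_le.mpr him
        linarith
      have key : t * ((1 - A) + ((i : ℝ) - kstar) * (A / t)) ≤ t * (B + T) := by
        have expand : t * ((1 - A) + ((i : ℝ) - kstar) * (A / t))
            = t * (1 - A) + ((i : ℝ) - kstar) * A := by
          field_simp
        rw [expand, ht_def]
        nlinarith [havg, mul_nonneg hx hmi]
      exact le_of_mul_le_mul_left key ht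
  have part1 : ∀ i : ℕ,
      ∑ k ∈ Finset.univ.filter (fun k : Fin m => k.val < i), qt k ≤
      ∑ k ∈ Finset.univ.filter (fun k : Fin m => k.val < i), qstar k := by
    intro i
    by_cases him : i ≤ m
    · rw [sum_filter_lt_eq_range qt him, sum_filter_lt_eq_range qstar him]
      exact part1r i him
    · push_neg at him
      have hfilt : ∀ (w : Fin m → ℝ),
          ∑ k ∈ Finset.univ.filter (fun k : Fin m => k.val < i), w k = ∑ k, w k := by
        intro w
        congr 1
        apply Finset.filter_true_of_mem
        intro k _
        exact lt_trans k.isLt him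
      rw [hfilt qt, hfilt qstar]
      have h1 : ∑ k, qt k = 1 := by rw [← sum_range_extF qt, ← hQt_def, hqt_sum]
      rw [h1, hqs_sum]
  refine ⟨part1, ?_⟩
  -- Entropy part
  have hlog2 : 0 < Real.log 2 := Real.log_pos one_lt_two
  have hsh : ∀ w : Fin m → ℝ, shannonH w = (∑ k, Real.negMulLog (w k)) / Real.log 2 := by
    intro w
    simp only [shannonH, Real.negMulLog, Real.logb]
    rw [Finset.sum_div]
    rw [← Finset.sum_neg_distrib]
    apply Finset.sum_congr rfl
    intro j _
    field_simp
  have hnml : ∑ k, Real.negMulLog (qstar k) ≤ ∑ k, Real.negMulLog (qt k) := by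
    set c : ℕ → ℝ := fun j => -Real.log (Qt j) - 1 with hc_def
    set d : ℕ → ℝ := fun j => Qs j - Qt j with hd_def
    have hc : ∀ a b : ℕ, a ≤ b → b < m → c a ≤ c b := by
      intro a b hab hbm
      have ham : a < m := lt_of_le_of_lt hab hbm
      simp only [hc_def, hQt_def, extF, dif_pos ham, dif_pos hbm]
      have h1 : qt ⟨b, hbm⟩ ≤ qt ⟨a, ham⟩ := hqtsort (by rw [Fin.le_def]; exact hab)
      have h2 : Real.log (qt ⟨b, hbm⟩) ≤ Real.log (qt ⟨a, ham⟩) :=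
        Real.log_le_log (hqt_pos _) h1
      linarith
    have hD : ∀ i : ℕ, i ≤ m → 0 ≤ ∑ k ∈ Finset.range i, d k := by
      intro i him
      simp only [hd_def, Finset.sum_sub_distrib]
      have := part1r i him
      linarith
    have hDm : ∑ k ∈ Finset.range m, d k = 0 := by
      simp only [hd_def, Finset.sum_sub_distrib, hqt_sum, hqs_sum_range]
      ring
    have habel := abel_nonpos m c d hc hD hDm
    have hstep : ∀ j ∈ Finset.range m,
        Real.negMulLog (Qs j) ≤ Real.negMulLog (Qt j) + c j * d j := by
      intro j hj
      have hjm := Finset.mem_range.mp hj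
      have h1 : 0 < Qt j := by
        simp only [hQt_def, extF, dif_pos hjm]; exact hqt_pos _
      have h2 : 0 < Qs j := by
        simp only [hQs_def, extF, dif_pos hjm]; exact hqs_pos _
      simpa [hc_def, hd_def] using negMulLog_tangent h1 h2
    have hsum1 : ∑ j ∈ Finset.range m, Real.negMulLog (Qs j)
        ≤ ∑ j ∈ Finset.range m, (Real.negMulLog (Qt j) + c j * d j) :=
      Finset.sum_le_sum hstep
    rw [Finset.sum_add_distrib] at hsum1
    have hconv : ∀ w : Fin m → ℝ,
        ∑ j ∈ Finset.range m, Real.negMulLog (extF w j) = ∑ k, Real.negMulLog (w k) := by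
      intro w
      rw [← sum_range_extF (fun k => Real.negMulLog (w k))]
      apply Finset.sum_congr rfl
      intro j hj
      have hjm := Finset.mem_range.mp hj
      simp [extF, dif_pos hjm]
    have e1 := hconv qstar
    have e2 := hconv qt
    rw [hQs_def] at *
    calc ∑ k, Real.negMulLog (qstar k)
        = ∑ j ∈ Finset.range m, Real.negMulLog (extF qstar j) := e1.symm
      _ ≤ ∑ j ∈ Finset.range m, Real.negMulLog (Qt j) + ∑ j ∈ Finset.range m, c j * d j := hsum1
      _ ≤ ∑ j ∈ Finset.range m, Real.negMulLog (Qt j) + 0 := by linarith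
      _ = ∑ k, Real.negMulLog (qt k) := by rw [add_zero, hQt_def]; exact e2
  rw [ge_iff_le, hsh qt, hsh qstar]
  exact (div_le_div_iff_of_pos_right hlog2).mpr hnml
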